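/- For 0 < q < 1, w a root of unity, h a positive integer, and m ≥ 1, the value β^{(h)}_{m,w}(q) given by the series formula (14) tends, as q → 1⁻ along real values, to the twisted Bernoulli number B_{m,w} defined by t/(we^t-1) = ∑ B_{n,w} t^n/n!, provided w ≠ 1. -/

import Mathlib

open Finset

open Filter fwdDiff

private lemma fwdDiff_pow' (n : ℕ) :
    Δ_[1] (fun x : ℂ => x ^ n) = ∑ j ∈ range n, (n.choose j : ℂ) • (fun x : ℂ => x ^ j) := by
  ext x
  simp only [fwdDiff, Finset.sum_apply, Pi.smul_apply, smul_eq_mul]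
  rw [add_pow, Finset.sum_range_succ]
  simp [mul_comm]

private lemma fwdDiff_iter_pow_zero' {m n : ℕ} (hnm : n < m) :
    (fwdDiff (1:ℂ))^[m] (fun x : ℂ => x ^ n) = 0 := by
  induction m generalizing n with
  | zero => omega
  | succ m ih =>
    rw [Function.iterate_succ_apply, fwdDiff_pow', fwdDiff_iter_finset_sum]
    refine Finset.sum_eq_zero fun j hj => ?_
    rw [fwdDiff_iter_const_smul, ih (by simp at hj; omega), smul_zero]

private lemma fwdDiff_iter_pow_self' (m : ℕ) :
    (fwdDiff (1:ℂ))^[m] (fun x : ℂ => x ^ m) = fun _ => (m.factorial : ℂ) := by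
  induction m with
  | zero => ext x; simp
  | succ m ih =>
    rw [Function.iterate_succ_apply, fwdDiff_pow', fwdDiff_iter_finset_sum,
      Finset.sum_range_succ]
    ext x
    rw [Pi.add_apply, Finset.sum_apply]
    rw [Finset.sum_eq_zero (fun j hj => by
      rw [fwdDiff_iter_const_smul, fwdDiff_iter_pow_zero' (Finset.mem_range.mp hj)]; simp)]
    simp [ih, Nat.factorial_succ]

private lemma cval (m h n : ℕ) :
    ∑ k ∈ range (m + 1), (m.choose k : ℂ) * (-1) ^ k * ((k : ℂ) + (h : ℂ)) ^ n
      = (-1 : ℂ) ^ m * ((fwdDiff (1:ℂ))^[m] (fun x => x ^ n) (h : ℂ)) := by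
  rw [fwdDiff_iter_eq_sum_shift, Finset.mul_sum]
  refine Finset.sum_congr rfl fun k hk => ?_
  have hk' : k ≤ m := Nat.lt_succ_iff.mp (Finset.mem_range.mp hk)
  have e1 : ((-1 : ℂ)) ^ (m - k) * (-1) ^ k = (-1) ^ m := by
    rw [← pow_add, Nat.sub_add_cancel hk']
  have e2 : (-1 : ℂ) ^ m * (-1) ^ (m - k) = (-1) ^ k := by
    have sq : ((-1 : ℂ)) ^ (m - k) * (-1) ^ (m - k) = 1 := by
      rw [← pow_add, ← two_mul, pow_mul]; norm_num
    calc (-1 : ℂ) ^ m * (-1) ^ (m - k)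
        = ((-1) ^ (m - k) * (-1) ^ k) * (-1) ^ (m - k) := by rw [e1]
      _ = (-1) ^ k * ((-1) ^ (m - k) * (-1) ^ (m - k)) := by ring
      _ = (-1) ^ k := by rw [sq, mul_one]
  rw [zsmul_eq_mul]
  push_cast
  rw [nsmul_eq_mul, mul_one]
  have : ((h : ℂ) + (k : ℂ)) ^ n = ((k : ℂ) + (h : ℂ)) ^ n := by ring
  rw [this]
  linear_combination (-(m.choose k : ℂ) * ((k : ℂ) + (h : ℂ)) ^ n) * e2

private lemma coefbound (w : ℂ) (hw1 : w ≠ 1) (B : ℕ → ℂ)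
    (hB : ∀ᶠ t in nhds (0 : ℂ),
      t / (w * Complex.exp t - 1) = ∑' n : ℕ, B n * t ^ n / (n.factorial : ℂ)) :
    ∃ r : ℝ, 0 < r ∧ ∃ C : ℝ, 0 ≤ C ∧ ∀ n : ℕ, ‖B n‖ * r ^ n / (n.factorial : ℝ) ≤ C := by
  have hcont : ContinuousAt (fun z : ℂ => w * Complex.exp z - 1) 0 :=
    ((continuous_const.mul Complex.continuous_exp).sub continuous_const).continuousAt
  have hne : ∀ᶠ z in nhds (0 : ℂ), w * Complex.exp z - 1 ≠ 0 :=
    hcont.eventually_ne (by simpa using sub_ne_zero.mpr hw1)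
  obtain ⟨ε, hε, hP⟩ := Metric.eventually_nhds_iff.mp (hB.and hne)
  set r : ℝ := ε / 2 with hr
  have hr0 : 0 < r := by positivity
  set z0 : ℂ := (r : ℂ) with hz0
  have hz0d : dist z0 0 < ε := by
    simp only [dist_zero_right, hz0, Complex.norm_real]
    rw [Real.norm_eq_abs, abs_of_pos hr0]; simp [hr]; linarith
  obtain ⟨heq, hden⟩ := hP hz0d
  have hz0ne : z0 ≠ 0 := by
    simp only [hz0, ne_eq, Complex.ofReal_eq_zero]; exact hr0.ne'
  have hsum : Summable (fun n => B n * z0 ^ n / (n.factorial : ℂ)) := by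
    by_contra hns
    rw [tsum_eq_zero_of_not_summable hns] at heq
    rcases div_eq_zero_iff.mp heq with h1 | h2
    · exact hz0ne h1
    · exact hden h2
  have hb : BddAbove (Set.range fun n => ‖B n * z0 ^ n / (n.factorial : ℂ)‖) :=
    hsum.tendsto_atTop_zero.norm.bddAbove_range
  obtain ⟨C, hC⟩ := hb
  refine ⟨r, hr0, C, ?_, fun n => ?_⟩
  · exact le_trans (norm_nonneg _) (hC (Set.mem_range_self 0))
  · have := hC (Set.mem_range_self n)
    rw [norm_div, norm_mul, norm_pow] at this
    simpa [hz0, abs_of_pos hr0] using this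

private lemma summ_geom {f : ℕ → ℂ} {A q : ℝ} (hq0 : 0 ≤ q) (hq1 : q < 1)
    (hf : ∀ n, ‖f n‖ ≤ A * q ^ n) : Summable f :=
  Summable.of_norm_bounded ((summable_geometric_of_lt_one hq0 hq1).mul_left A) hf

private lemma key (w : ℂ) (hw1 : w ≠ 1) (h m : ℕ) (hh : 1 ≤ h) (hm : 1 ≤ m) (B : ℕ → ℂ)
    (hB : ∀ᶠ t in nhds (0 : ℂ),
      t / (w * Complex.exp t - 1) = ∑' n : ℕ, B n * t ^ n / (n.factorial : ℂ)) :
    Filter.Tendsto (fun z : ℂ =>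
        (1 / (1 - Complex.exp z) ^ (m - 1)) *
          ∑ k ∈ range (m + 1), (m.choose k : ℂ) * (-1) ^ k * ((k : ℂ) + (h : ℂ)) /
            (1 - Complex.exp (((h + k : ℕ) : ℂ) * z) * w))
      (nhdsWithin 0 {(0:ℂ)}ᶜ) (nhds (B m)) := by
  obtain ⟨r, hr0, C, hC0, hC⟩ := coefbound w hw1 B hB
  have hBC : ∀ j : ℕ, ‖B j‖ / (j.factorial : ℝ) ≤ C / r ^ j := by
    intro j
    rw [div_le_div_iff₀ (by positivity) (by positivity)]
    calc ‖B j‖ * r ^ j = ‖B j‖ * r ^ j / (j.factorial : ℝ) * (j.factorial : ℝ) := by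
          field_simp
      _ ≤ C * (j.factorial : ℝ) := by
          have := hC j
          have hf : (0:ℝ) < (j.factorial : ℝ) := by positivity
          nlinarith
  -- the c coefficients
  set c : ℕ → ℂ := fun n =>
    ∑ k ∈ range (m + 1), (m.choose k : ℂ) * (-1) ^ k * ((k : ℂ) + (h : ℂ)) ^ n with hc
  have hcvan : ∀ n, n < m → c n = 0 := by
    intro n hn
    rw [hc]; simp only
    rw [cval, fwdDiff_iter_pow_zero' hn]; simp
  have hcm : c m = (-1 : ℂ) ^ m * (m.factorial : ℂ) := by
    rw [hc]; simp only
    rw [cval, fwdDiff_iter_pow_self' m]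
  have hcb : ∀ n, ‖c n‖ ≤ 2 ^ m * ((h + m : ℕ) : ℝ) ^ n := by
    intro n
    rw [hc]
    refine le_trans (norm_sum_le _ _) ?_
    have : ∀ k ∈ range (m + 1),
        ‖(m.choose k : ℂ) * (-1) ^ k * ((k : ℂ) + (h : ℂ)) ^ n‖
          ≤ (m.choose k : ℝ) * ((h + m : ℕ) : ℝ) ^ n := by
      intro k hk
      have hk' : k ≤ m := Nat.lt_succ_iff.mp (Finset.mem_range.mp hk)
      rw [norm_mul, norm_mul, norm_pow, norm_pow]
      simp only [norm_neg, norm_one, one_pow, mul_one, Complex.norm_natCast]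
      have h1 : ‖(k : ℂ) + (h : ℂ)‖ = ((k + h : ℕ) : ℝ) := by
        rw [show ((k : ℂ) + (h : ℂ)) = ((k + h : ℕ) : ℂ) by push_cast; ring,
          Complex.norm_natCast]
      rw [h1]
      have h2 : ((k + h : ℕ) : ℝ) ≤ ((h + m : ℕ) : ℝ) := Nat.cast_le.mpr (by omega)
      gcongr
    refine le_trans (Finset.sum_le_sum this) ?_
    rw [← Finset.sum_mul,
      show (∑ k ∈ range (m + 1), (m.choose k : ℝ)) = 2 ^ m from by
        exact_mod_cast Nat.sum_range_choose m]
  set ρ : ℝ := ((h + m : ℕ) : ℝ) / r with hρ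
  have hρ0 : 0 < ρ := by
    apply div_pos _ hr0
    exact_mod_cast Nat.pos_of_ne_zero (by omega)
  set A : ℝ := 2 ^ m * C * ρ ^ m with hA
  have hA0 : 0 ≤ A := by positivity
  -- bound for the K coefficients
  have hKterm : ∀ (z : ℂ) (n : ℕ),
      ‖c (n + m) * B (n + m) * z ^ n / (((n + m).factorial : ℕ) : ℂ)‖
        ≤ A * (ρ * ‖z‖) ^ n := by
    intro z n
    have e : ‖c (n + m) * B (n + m) * z ^ n / (((n + m).factorial : ℕ) : ℂ)‖
        = ‖c (n + m)‖ * (‖B (n + m)‖ / (((n + m).factorial : ℕ) : ℝ)) * ‖z‖ ^ n := by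
      rw [norm_div, norm_mul, norm_mul, norm_pow, Complex.norm_natCast]
      ring
    rw [e]
    calc ‖c (n + m)‖ * (‖B (n + m)‖ / (((n + m).factorial : ℕ) : ℝ)) * ‖z‖ ^ n
        ≤ (2 ^ m * ((h + m : ℕ) : ℝ) ^ (n + m)) * (C / r ^ (n + m)) * ‖z‖ ^ n := by
          refine mul_le_mul_of_nonneg_right ?_ (by positivity)
          exact mul_le_mul (hcb (n + m)) (hBC (n + m)) (by positivity) (by positivity)
      _ = A * (ρ * ‖z‖) ^ n := by
          rw [hA, hρ, mul_pow, div_pow, div_pow]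
          field_simp
          ring
  -- K and its limit
  set K : ℂ → ℂ := fun z =>
    ∑' n : ℕ, c (n + m) * B (n + m) * z ^ n / (((n + m).factorial : ℕ) : ℂ) with hKdef
  have hK0 : K 0 = c m * B m / ((m.factorial : ℕ) : ℂ) := by
    rw [hKdef]
    simp only
    rw [tsum_eq_single 0 (by intro n hn; rw [zero_pow hn]; simp)]
    simp
  have hKsum : ∀ z : ℂ, ρ * ‖z‖ < 1 →
      Summable (fun n => c (n + m) * B (n + m) * z ^ n / (((n + m).factorial : ℕ) : ℂ)) := by
    intro z hz
    exact summ_geom (by positivity) hz (hKterm z)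
  have hgeo2 : Summable (fun n : ℕ => (1/2 : ℝ) ^ n) :=
    summable_geometric_of_lt_one (by norm_num) (by norm_num)
  have hKtend : Filter.Tendsto K (nhds 0) (nhds (K 0)) := by
    have hev : ∀ᶠ z : ℂ in nhds 0, ‖K z - K 0‖ ≤ (2 * (A * ρ)) * ‖z‖ := by
      have hball : ∀ᶠ z : ℂ in nhds 0, ρ * ‖z‖ < 1/2 := by
        have hcont : Filter.Tendsto (fun z : ℂ => ρ * ‖z‖) (nhds 0) (nhds 0) := by
          have hc2 : Continuous (fun z : ℂ => ρ * ‖z‖) := continuous_const.mul continuous_norm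
          simpa using hc2.tendsto 0
        exact hcont.eventually (gt_mem_nhds (by norm_num : (0:ℝ) < 1/2))
      filter_upwards [hball] with z hz
      have hq0 : 0 ≤ ρ * ‖z‖ := by positivity
      have hq1 : ρ * ‖z‖ < 1 := lt_trans hz (by norm_num)
      have hsum := hKsum z hq1
      have hshift := Summable.sum_add_tsum_nat_add
        (f := fun n => c (n + m) * B (n + m) * z ^ n / (((n + m).factorial : ℕ) : ℂ)) 1 hsum
      have ht0 : ∑ i ∈ range 1, c (i + m) * B (i + m) * z ^ i / (((i + m).factorial : ℕ) : ℂ)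
          = K 0 := by
        rw [hK0]; simp
      have hKz : K z - K 0
          = ∑' n : ℕ, c (n + 1 + m) * B (n + 1 + m) * z ^ (n + 1)
              / (((n + 1 + m).factorial : ℕ) : ℂ) := by
        rw [hKdef]
        simp only
        rw [← hshift, ht0]
        ring
      rw [hKz]
      have hb1 : ∀ n : ℕ, ‖c (n + 1 + m) * B (n + 1 + m) * z ^ (n + 1)
          / (((n + 1 + m).factorial : ℕ) : ℂ)‖ ≤ (A * (ρ * ‖z‖)) * (1/2) ^ n := by
        intro n
        refine le_trans (hKterm z (n + 1)) ?_
        rw [pow_succ']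
        rw [← mul_assoc]
        gcongr
      have hsn : Summable (fun n : ℕ => ‖c (n + 1 + m) * B (n + 1 + m) * z ^ (n + 1)
          / (((n + 1 + m).factorial : ℕ) : ℂ)‖) := by
        refine Summable.of_nonneg_of_le (fun n => norm_nonneg _) hb1 ?_
        exact hgeo2.mul_left _
      calc ‖∑' n : ℕ, c (n + 1 + m) * B (n + 1 + m) * z ^ (n + 1)
              / (((n + 1 + m).factorial : ℕ) : ℂ)‖
          ≤ ∑' n : ℕ, ‖c (n + 1 + m) * B (n + 1 + m) * z ^ (n + 1)
              / (((n + 1 + m).factorial : ℕ) : ℂ)‖ := norm_tsum_le_tsum_norm hsn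
        _ ≤ ∑' n : ℕ, (A * (ρ * ‖z‖)) * (1/2) ^ n :=
            Summable.tsum_le_tsum hb1 hsn (hgeo2.mul_left _)
        _ = (A * (ρ * ‖z‖)) * 2 := by rw [tsum_mul_left, tsum_geometric_two]
        _ = (2 * (A * ρ)) * ‖z‖ := by ring
    have hnorm0 : Filter.Tendsto (fun z : ℂ => (2 * (A * ρ)) * ‖z‖) (nhds 0) (nhds 0) := by
      have hc2 : Continuous (fun z : ℂ => (2 * (A * ρ)) * ‖z‖) := continuous_const.mul continuous_norm
      simpa using hc2.tendsto 0
    have hsub : Filter.Tendsto (fun z : ℂ => K z - K 0) (nhds 0) (nhds 0) :=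
      squeeze_zero_norm' hev hnorm0
    have := hsub.add (tendsto_const_nhds (x := K 0))
    simpa using this
  -- limit of z / (1 - exp z)
  have hslope : Filter.Tendsto (fun z : ℂ => (Complex.exp z - 1) / z)
      (nhdsWithin 0 {(0:ℂ)}ᶜ) (nhds 1) := by
    have hd := Complex.hasDerivAt_exp 0
    rw [hasDerivAt_iff_tendsto_slope] at hd
    have hsl : slope Complex.exp 0 = fun z : ℂ => (Complex.exp z - 1) / z := by
      funext z
      rw [slope_def_field, Complex.exp_zero, sub_zero]
    rw [hsl, Complex.exp_zero] at hd
    exact hd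
  have hfrac : Filter.Tendsto (fun z : ℂ => z / (1 - Complex.exp z))
      (nhdsWithin 0 {(0:ℂ)}ᶜ) (nhds (-1)) := by
    have h2 := (hslope.inv₀ one_ne_zero).neg
    rw [inv_one] at h2
    refine h2.congr fun z => ?_
    rw [inv_div, ← neg_sub (Complex.exp z) 1, div_neg]
  -- limit of the model function
  have hfaccast : ((m.factorial : ℕ) : ℂ) ≠ 0 := Nat.cast_ne_zero.mpr m.factorial_ne_zero
  have hpow : (-1:ℂ) ^ (m - 1) * (-1) ^ m = -1 := by
    rw [← pow_add]
    have he : m - 1 + m = 2 * (m - 1) + 1 := by omega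
    rw [he, pow_succ, pow_mul]
    norm_num
  have hval : -((-1:ℂ) ^ (m - 1) * (c m * B m / ((m.factorial : ℕ) : ℂ))) = B m := by
    rw [hcm]
    field_simp
    linear_combination (-B m) * hpow
  have hRHS : Filter.Tendsto (fun z : ℂ => -((z / (1 - Complex.exp z)) ^ (m - 1) * K z))
      (nhdsWithin 0 {(0:ℂ)}ᶜ) (nhds (B m)) := by
    have := ((hfrac.pow (m - 1)).mul (hKtend.mono_left nhdsWithin_le_nhds)).neg
    rw [hK0] at this
    rw [← hval]
    exact this
  -- eventual equality
  have hBk : ∀ᶠ z : ℂ in nhds 0, ∀ k ∈ range (m + 1),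
      ((h + k : ℕ) : ℂ) * z / (w * Complex.exp (((h + k : ℕ) : ℂ) * z) - 1)
        = ∑' n : ℕ, B n * (((h + k : ℕ) : ℂ) * z) ^ n / (n.factorial : ℂ) := by
    rw [eventually_all_finset]
    intro k hk
    have hcont : Filter.Tendsto (fun z : ℂ => ((h + k : ℕ) : ℂ) * z) (nhds 0) (nhds 0) := by
      have hc2 : Continuous (fun z : ℂ => ((h + k : ℕ) : ℂ) * z) := continuous_const.mul continuous_id
      simpa using hc2.tendsto 0
    exact hcont.eventually hB
  have hball2 : ∀ᶠ z : ℂ in nhds 0, ρ * ‖z‖ < 1 := by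
    have hcont : Filter.Tendsto (fun z : ℂ => ρ * ‖z‖) (nhds 0) (nhds 0) := by
      have hc2 : Continuous (fun z : ℂ => ρ * ‖z‖) := continuous_const.mul continuous_norm
      simpa using hc2.tendsto 0
    exact hcont.eventually (gt_mem_nhds (by norm_num : (0:ℝ) < 1))
  have heq : ∀ᶠ z : ℂ in nhdsWithin 0 {(0:ℂ)}ᶜ,
      (1 / (1 - Complex.exp z) ^ (m - 1)) *
          ∑ k ∈ range (m + 1), (m.choose k : ℂ) * (-1) ^ k * ((k : ℂ) + (h : ℂ)) /
            (1 - Complex.exp (((h + k : ℕ) : ℂ) * z) * w)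
        = -((z / (1 - Complex.exp z)) ^ (m - 1) * K z) := by
    filter_upwards [eventually_nhdsWithin_of_eventually_nhds (hball2.and hBk),
      self_mem_nhdsWithin] with z hz hzmem
    obtain ⟨hρz, hBkz⟩ := hz
    have hzne : z ≠ 0 := hzmem
    have hq0 : 0 ≤ ρ * ‖z‖ := by positivity
    -- basic bound for B-terms
    have hBzb : ∀ n : ℕ, ‖B n * z ^ n / (n.factorial : ℂ)‖ ≤ C * (‖z‖ / r) ^ n := by
      intro n
      have e : ‖B n * z ^ n / (n.factorial : ℂ)‖ = ‖B n‖ / (n.factorial : ℝ) * ‖z‖ ^ n := by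
        rw [norm_div, norm_mul, norm_pow, Complex.norm_natCast]
        ring
      rw [e, div_pow]
      calc ‖B n‖ / (n.factorial : ℝ) * ‖z‖ ^ n ≤ C / r ^ n * ‖z‖ ^ n :=
            mul_le_mul_of_nonneg_right (hBC n) (by positivity)
        _ = C * (‖z‖ ^ n / r ^ n) := by ring
    have hkpow : ∀ k, k ∈ range (m + 1) → ∀ n : ℕ,
        ‖(k : ℂ) + (h : ℂ)‖ ^ n ≤ ((h + m : ℕ) : ℝ) ^ n := by
      intro k hk n
      have hk' : k ≤ m := Nat.lt_succ_iff.mp (Finset.mem_range.mp hk)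
      rw [show ((k : ℂ) + (h : ℂ)) = ((k + h : ℕ) : ℂ) by push_cast; ring,
        Complex.norm_natCast]
      exact pow_le_pow_left₀ (by positivity) (Nat.cast_le.mpr (by omega)) n
    have hgeoz : Summable (fun n : ℕ => (ρ * ‖z‖) ^ n) :=
      summable_geometric_of_lt_one hq0 hρz
    have hratio : ∀ n : ℕ, ((h + m : ℕ) : ℝ) ^ n * (C * (‖z‖ / r) ^ n)
        = C * (ρ * ‖z‖) ^ n := by
      intro n
      rw [hρ, mul_pow, div_pow, div_pow]
      ring
    -- summability of the per-k families
    have hfsumm : ∀ k ∈ range (m + 1), Summable (fun n : ℕ =>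
        (m.choose k : ℂ) * (-1) ^ k *
          (((k : ℂ) + (h : ℂ)) ^ n * (B n * z ^ n / (n.factorial : ℂ)))) := by
      intro k hk
      refine summ_geom (A := (m.choose k : ℝ) * C) hq0 hρz fun n => ?_
      have e : ‖(m.choose k : ℂ) * (-1) ^ k *
            (((k : ℂ) + (h : ℂ)) ^ n * (B n * z ^ n / (n.factorial : ℂ)))‖
          = (m.choose k : ℝ) * (‖(k : ℂ) + (h : ℂ)‖ ^ n
              * ‖B n * z ^ n / (n.factorial : ℂ)‖) := by
        rw [norm_mul, norm_mul, norm_mul, norm_pow, norm_pow]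
        simp [Complex.norm_natCast]
      rw [e]
      calc (m.choose k : ℝ) * (‖(k : ℂ) + (h : ℂ)‖ ^ n * ‖B n * z ^ n / (n.factorial : ℂ)‖)
          ≤ (m.choose k : ℝ) * (((h + m : ℕ) : ℝ) ^ n * (C * (‖z‖ / r) ^ n)) := by
            refine mul_le_mul_of_nonneg_left ?_ (by positivity)
            exact mul_le_mul (hkpow k hk n) (hBzb n) (norm_nonneg _) (by positivity)
        _ = (m.choose k : ℝ) * C * (ρ * ‖z‖) ^ n := by rw [hratio]; ring
    -- rewrite each term using hB
    have hterm : ∀ k ∈ range (m + 1),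
        (m.choose k : ℂ) * (-1) ^ k * ((k : ℂ) + (h : ℂ)) /
            (1 - Complex.exp (((h + k : ℕ) : ℂ) * z) * w)
          = -(1/z) * ∑' n : ℕ, (m.choose k : ℂ) * (-1) ^ k *
              (((k : ℂ) + (h : ℂ)) ^ n * (B n * z ^ n / (n.factorial : ℂ))) := by
      intro k hk
      have hBz := hBkz k hk
      have ht : ∑' n : ℕ, B n * (((h + k : ℕ) : ℂ) * z) ^ n / (n.factorial : ℂ)
          = ∑' n : ℕ, ((k : ℂ) + (h : ℂ)) ^ n * (B n * z ^ n / (n.factorial : ℂ)) := by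
        refine tsum_congr fun n => ?_
        rw [mul_pow]
        push_cast
        ring
      rw [ht] at hBz
      rw [tsum_mul_left, ← hBz]
      have hD : (1 : ℂ) - Complex.exp (((h + k : ℕ) : ℂ) * z) * w
          = -(w * Complex.exp (((h + k : ℕ) : ℂ) * z) - 1) := by ring
      rw [hD, div_neg, neg_mul, neg_inj]
      have hNc : ((h + k : ℕ) : ℂ) = (k : ℂ) + (h : ℂ) := by push_cast; ring
      rw [hNc]
      have hzz3 : z⁻¹ * z = 1 := inv_mul_cancel₀ hzne
      simp only [div_eq_mul_inv, one_div]
      linear_combination (-((m.choose k : ℂ) * (-1) ^ k * ((k : ℂ) + (h : ℂ)) *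
        (w * Complex.exp (((k : ℂ) + (h : ℂ)) * z) - 1)⁻¹)) * hzz3
    rw [Finset.sum_congr rfl hterm, ← Finset.mul_sum]
    -- swap sum and tsum
    rw [← Summable.tsum_finsetSum hfsumm]
    -- collect coefficients
    have hcollect : ∀ n : ℕ, (∑ k ∈ range (m + 1), (m.choose k : ℂ) * (-1) ^ k *
          (((k : ℂ) + (h : ℂ)) ^ n * (B n * z ^ n / (n.factorial : ℂ))))
        = c n * (B n * z ^ n / (n.factorial : ℂ)) := by
      intro n
      rw [hc]
      simp only
      rw [Finset.sum_mul]
      refine Finset.sum_congr rfl fun k hk => ?_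
      ring
    rw [tsum_congr hcollect]
    -- drop vanishing initial terms and shift
    have hGsum : Summable (fun n : ℕ => c n * (B n * z ^ n / (n.factorial : ℂ))) := by
      refine summ_geom (A := 2 ^ m * C) hq0 hρz fun n => ?_
      rw [norm_mul]
      calc ‖c n‖ * ‖B n * z ^ n / (n.factorial : ℂ)‖
          ≤ (2 ^ m * ((h + m : ℕ) : ℝ) ^ n) * (C * (‖z‖ / r) ^ n) :=
            mul_le_mul (hcb n) (hBzb n) (norm_nonneg _) (by positivity)
        _ = 2 ^ m * C * (ρ * ‖z‖) ^ n := by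
            rw [mul_assoc, hratio]
            ring
    have hshift := Summable.sum_add_tsum_nat_add
      (f := fun n : ℕ => c n * (B n * z ^ n / (n.factorial : ℂ))) m hGsum
    have hzero : ∑ i ∈ range m, c i * (B i * z ^ i / (i.factorial : ℂ)) = 0 :=
      Finset.sum_eq_zero fun i hi => by
        rw [hcvan i (Finset.mem_range.mp hi), zero_mul]
    rw [← hshift, hzero, zero_add]
    have hfac2 : ∀ n : ℕ, c (n + m) * (B (n + m) * z ^ (n + m) / (((n + m).factorial : ℕ) : ℂ))
        = z ^ m * (c (n + m) * B (n + m) * z ^ n / (((n + m).factorial : ℕ) : ℂ)) := by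
      intro n
      rw [pow_add]
      ring
    rw [tsum_congr hfac2, tsum_mul_left]
    -- final algebra
    rw [hKdef]
    simp only
    rw [div_pow]
    have hzz : z * z⁻¹ = 1 := mul_inv_cancel₀ hzne
    have hzm : z ^ m = z ^ (m - 1) * z := by
      conv_lhs => rw [show m = (m - 1) + 1 by omega]
      rw [pow_succ]
    rw [hzm]
    simp only [one_div, div_eq_mul_inv]
    linear_combination (-(((1 - Complex.exp z) ^ (m - 1))⁻¹ * z ^ (m - 1) *
      ∑' n : ℕ, c (n + m) * B (n + m) * z ^ n * (((n + m).factorial : ℕ) : ℂ)⁻¹)) * hzz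
  exact hRHS.congr' (heq.mono fun z hz => hz.symm)

/-- As q → 1⁻, the twisted q-Bernoulli number β^{(h)}_{m,w}(q) (formula (13)
with x = 0) tends to the twisted Bernoulli number B_{m,w}. -/
theorem stmt_12 (w : ℂ) (hw : ∃ k : ℕ, 0 < k ∧ w ^ k = 1) (hw1 : w ≠ 1)
    (h : ℕ) (hh : 1 ≤ h) (m : ℕ) (hm : 1 ≤ m)
    (B : ℕ → ℂ)
    (hB : ∀ᶠ t in nhds (0 : ℂ),
      t / (w * Complex.exp t - 1) = ∑' n : ℕ, B n * t ^ n / (n.factorial : ℂ)) :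
    Filter.Tendsto (fun q : ℝ =>
        (1 / (1 - (q : ℂ)) ^ (m - 1)) *
          ∑ k ∈ range (m + 1), (m.choose k : ℂ) * (-1) ^ k * ((k : ℂ) + (h : ℂ)) /
            (1 - (q : ℂ) ^ (h + k) * w))
      (nhdsWithin 1 (Set.Ioo 0 1)) (nhds (B m)) := by
  have hkey := key w hw1 h m hh hm B hB
  have hlog : Filter.Tendsto (fun q : ℝ => ((Real.log q : ℝ) : ℂ))
      (nhdsWithin 1 (Set.Ioo 0 1)) (nhdsWithin 0 {(0:ℂ)}ᶜ) := by
    rw [tendsto_nhdsWithin_iff]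
    constructor
    · have h1 : Filter.Tendsto Real.log (nhdsWithin 1 (Set.Ioo 0 1)) (nhds 0) := by
        have h2 := (Real.continuousAt_log (by norm_num : (1:ℝ) ≠ 0)).tendsto
        rw [Real.log_one] at h2
        exact h2.mono_left nhdsWithin_le_nhds
      have h3 := (Complex.continuous_ofReal.tendsto 0).comp h1
      simpa [Function.comp_def] using h3
    · filter_upwards [self_mem_nhdsWithin] with q hq
      have hne : Real.log q ≠ 0 := ne_of_lt (Real.log_neg hq.1 hq.2)
      simpa using hne
  refine (hkey.comp hlog).congr' ?_
  filter_upwards [self_mem_nhdsWithin] with q hq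
  have hexp : Complex.exp ((Real.log q : ℝ) : ℂ) = (q : ℂ) := by
    rw [← Complex.ofReal_exp, Real.exp_log hq.1]
  have hpow : ∀ k : ℕ, Complex.exp (((h + k : ℕ) : ℂ) * ((Real.log q : ℝ) : ℂ))
      = (q : ℂ) ^ (h + k) := by
    intro k
    rw [Complex.exp_nat_mul, hexp]
  simp only [Function.comp_apply]
  rw [hexp]
  refine congrArg _ (Finset.sum_congr rfl fun k _ => ?_)
  rw [hpow k]
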